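/- arXiv:2003.13113 — 2 statements merged into one kernel-verified Lean document; each statement's English description precedes it below -/
import Mathlib

section
/- With F and P the explicit tile and discrete set in GL_n(ℝ) defined below, the translates of F by distinct elements of P are disjoint: F·p ∩ F·q = ∅ for all p ≠ q in P, where F·p = {ap : a ∈ F}. -/
noncomputable section

/-- `M_n(ℝ)`, the `n × n` real matrices, identified with `ℝ^{n²}`. -/
abbrev Mn (n : ℕ) : Type := Matrix (Fin n) (Fin n) ℝ

/-- The tile `F ⊆ GL_n(ℝ)`: matrices `s • (k * w * y)` with `s ∈ [1,2)`,
`k` orthogonal, `w = diag(w₁, …, w_{n-1}, (w₁⋯w_{n-1})⁻¹)` with each `w_i ∈ [1,2)`,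
and `y` unit upper triangular with strict upper entries in `[0,1)`. -/
def Fset (n : ℕ) : Set (Mn n) :=
  {a | ∃ (s : ℝ) (k : Mn n) (wd : Fin n → ℝ) (y : Mn n),
    s ∈ Set.Ico (1 : ℝ) 2 ∧
    k.transpose * k = 1 ∧
    (∀ i : Fin n, (i : ℕ) < n - 1 → wd i ∈ Set.Ico (1 : ℝ) 2) ∧
    (∀ i : Fin n, (i : ℕ) = n - 1 →
      wd i = (∏ j ∈ Finset.filter (fun j : Fin n => (j : ℕ) < n - 1) Finset.univ, wd j)⁻¹) ∧
    (∀ i, y i i = 1) ∧ (∀ i j : Fin n, j < i → y i j = 0) ∧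
    (∀ i j : Fin n, i < j → y i j ∈ Set.Ico (0 : ℝ) 1) ∧
    a = s • (k * Matrix.diagonal wd * y)}

/-- The discrete set `P ⊆ GL_n(ℝ)`: matrices `2^λ • u` with `u` upper triangular,
`u_{ii} = 2^{κ_i}`, `u_{ij} = 2^{κ_j} μ_{ij}` for `i < j`, where `λ, κ_i, μ_{ij} ∈ ℤ`
and `κ₁ + ⋯ + κ_n = 0` (i.e. `κ_n = -(κ₁ + ⋯ + κ_{n-1})`). -/
def Pset (n : ℕ) : Set (Mn n) :=
  {p | ∃ (lam : ℤ) (κ : Fin n → ℤ) (μ : Fin n → Fin n → ℤ),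
    (∑ i, κ i) = 0 ∧
    p = (2 : ℝ) ^ lam • Matrix.of (fun i j : Fin n =>
      if i = j then (2 : ℝ) ^ (κ i)
      else if i < j then (2 : ℝ) ^ (κ j) * (μ i j : ℝ)
      else 0)}

/-- The enlarged tile `F_o`: as `F`, but with `s, w_i ∈ (1-ε, 2+ε)` and strict upper
entries of `y` in `(-ε, 1+ε)`. -/
def FoSet (n : ℕ) (ε : ℝ) : Set (Mn n) :=
  {a | ∃ (s : ℝ) (k : Mn n) (wd : Fin n → ℝ) (y : Mn n),
    s ∈ Set.Ioo (1 - ε) (2 + ε) ∧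
    k.transpose * k = 1 ∧
    (∀ i : Fin n, (i : ℕ) < n - 1 → wd i ∈ Set.Ioo (1 - ε) (2 + ε)) ∧
    (∀ i : Fin n, (i : ℕ) = n - 1 →
      wd i = (∏ j ∈ Finset.filter (fun j : Fin n => (j : ℕ) < n - 1) Finset.univ, wd j)⁻¹) ∧
    (∀ i, y i i = 1) ∧ (∀ i j : Fin n, j < i → y i j = 0) ∧
    (∀ i j : Fin n, i < j → y i j ∈ Set.Ioo (-ε) (1 + ε)) ∧
    a = s • (k * Matrix.diagonal wd * y)}

open Matrix Finset

/-- If `s, s' ∈ [1,2)` and `s·2^a = s'·2^b` then `a = b` and `s = s'`. -/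
lemma dyadic_unique {s s' : ℝ} {a b : ℤ} (hs : s ∈ Set.Ico (1:ℝ) 2)
    (hs' : s' ∈ Set.Ico (1:ℝ) 2) (h : s * 2 ^ a = s' * 2 ^ b) : a = b ∧ s = s' := by
  have h2 : ∀ c d : ℤ, c < d → ((2:ℝ)^c) * 2 ≤ 2 ^ d := by
    intro c d hcd
    calc (2:ℝ)^c * 2 = 2 ^ (c+1) := by rw [zpow_add₀ (by norm_num : (2:ℝ) ≠ 0), zpow_one]
    _ ≤ 2 ^ d := by
        apply zpow_le_zpow_right₀ (by norm_num) (by omega)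
  have hab : a = b := by
    rcases lt_trichotomy a b with hlt | he | hgt
    · exfalso
      have h2' := h2 a b hlt
      have hs'1 := hs'.1
      nlinarith [zpow_pos (by norm_num : (0:ℝ) < 2) a, zpow_pos (by norm_num : (0:ℝ) < 2) b,
        hs.2]
    · exact he
    · exfalso
      have h2' := h2 b a hgt
      nlinarith [zpow_pos (by norm_num : (0:ℝ) < 2) a, zpow_pos (by norm_num : (0:ℝ) < 2) b,
        hs.1, hs'.2]
  refine ⟨hab, ?_⟩
  subst hab
  have := zpow_pos (by norm_num : (0:ℝ) < 2) a
  exact mul_right_cancel₀ (ne_of_gt this) h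

/-- Uniqueness of the QR decomposition with positive-diagonal triangular factor. -/
lemma qr_unique {n : ℕ} (k k' T T' : Mn n) (hk : k.transpose * k = 1)
    (hk' : k'.transpose * k' = 1)
    (hT : T.BlockTriangular id) (hT' : T'.BlockTriangular id)
    (hTd : ∀ i, 0 < T i i) (hT'd : ∀ i, 0 < T' i i) (h : k * T = k' * T') : T = T' := by
  have hdet : IsUnit T.det := by
    rw [Matrix.det_of_upperTriangular hT]
    exact (Finset.prod_pos (fun i _ => hTd i)).ne'.isUnit
  have hTinv : T * T⁻¹ = 1 := Matrix.mul_nonsing_inv T hdet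
  have hTinv' : T⁻¹ * T = 1 := Matrix.nonsing_inv_mul T hdet
  set M := T' * T⁻¹ with hM
  have hMk : M = k'.transpose * k := by
    have h1 : k'.transpose * (k * T) = T' := by
      rw [h, ← Matrix.mul_assoc, hk', Matrix.one_mul]
    calc M = (k'.transpose * (k * T)) * T⁻¹ := by rw [h1]
    _ = k'.transpose * k * (T * T⁻¹) := by
          simp only [Matrix.mul_assoc]
    _ = k'.transpose * k := by rw [hTinv, Matrix.mul_one]
  have hMT : M * T = T' := by
    rw [hM, Matrix.mul_assoc, hTinv', Matrix.mul_one]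
  have hMo : M.transpose * M = 1 := by
    rw [hMk, Matrix.transpose_mul, Matrix.transpose_transpose]
    calc k.transpose * k'.transpose.transpose * (k'.transpose * k)
        = k.transpose * ((k' * k'.transpose) * k) := by
          rw [Matrix.transpose_transpose, Matrix.mul_assoc, Matrix.mul_assoc]
    _ = 1 := by rw [mul_eq_one_comm.mp hk', Matrix.one_mul, hk]
  haveI : Invertible T := T.invertibleOfIsUnitDet hdet
  have hMut : M.BlockTriangular id := hT'.mul (Matrix.blockTriangular_inv_of_blockTriangular hT)
  have hMinv : M⁻¹ = M.transpose := ((Matrix.inv_eq_left_inv hMo).symm).symm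
  haveI : Invertible M := M.invertibleOfIsUnitDet (by
    have : M.det * M.det = 1 := by
      have := congrArg Matrix.det hMo
      rwa [Matrix.det_mul, Matrix.det_transpose, Matrix.det_one] at this
    exact (left_ne_zero_of_mul_eq_one this).isUnit)
  have hMtut : M.transpose.BlockTriangular id := by
    rw [← hMinv]; exact Matrix.blockTriangular_inv_of_blockTriangular hMut
  have hMoffdiag : ∀ i j : Fin n, i ≠ j → M i j = 0 := by
    intro i j hij
    rcases lt_or_gt_of_ne hij with hlt | hgt
    · have := hMtut (i := j) (j := i) hlt
      simpa [Matrix.transpose_apply] using this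
    · exact hMut hgt
  have hdiagmul : ∀ i, M i i * T i i = T' i i := by
    intro i
    have := congrFun (congrFun hMT i) i
    rw [Matrix.mul_apply] at this
    rwa [Finset.sum_eq_single i (fun l _ hl => by rw [hMoffdiag i l (Ne.symm hl), zero_mul])
      (fun h => absurd (Finset.mem_univ i) h)] at this
  have hMsq : ∀ i, M i i * M i i = 1 := by
    intro i
    have := congrFun (congrFun hMo i) i
    rw [Matrix.mul_apply] at this
    rw [Finset.sum_eq_single i (fun l _ hl => by
      simp only [Matrix.transpose_apply]
      rw [hMoffdiag l i hl, zero_mul])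
      (fun h => absurd (Finset.mem_univ i) h)] at this
    simpa [Matrix.transpose_apply, Matrix.one_apply] using this
  have hMdiag : ∀ i, M i i = 1 := by
    intro i
    have hpos : 0 < M i i := by
      have := hdiagmul i
      nlinarith [hTd i, hT'd i]
    nlinarith [hMsq i]
  have hMone : M = 1 := by
    ext i j
    rcases eq_or_ne i j with rfl | hij
    · rw [hMdiag i, Matrix.one_apply_eq]
    · rw [hMoffdiag i j hij, Matrix.one_apply_ne hij]
  rw [← hMT, hMone, Matrix.one_mul]

/-- The upper-triangular matrix appearing in `Pset`. -/
def U (n : ℕ) (κ : Fin n → ℤ) (μ : Fin n → Fin n → ℤ) : Mn n :=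
  Matrix.of (fun i j : Fin n =>
    if i = j then (2 : ℝ) ^ (κ i)
    else if i < j then (2 : ℝ) ^ (κ j) * (μ i j : ℝ)
    else 0)

lemma U_bt {n : ℕ} (κ : Fin n → ℤ) (μ : Fin n → Fin n → ℤ) :
    (U n κ μ).BlockTriangular id := by
  intro i j hij
  simp only [U, Matrix.of_apply]
  rw [if_neg (by exact fun h => absurd h (ne_of_gt hij)),
    if_neg (by exact fun h => absurd h (asymm hij))]

lemma yU_diag {n : ℕ} (κ : Fin n → ℤ) (μ : Fin n → Fin n → ℤ) (y : Mn n)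
    (hyd : ∀ i, y i i = 1) (hyl : ∀ i j : Fin n, j < i → y i j = 0) (i : Fin n) :
    (y * U n κ μ) i i = (2:ℝ) ^ (κ i) := by
  rw [Matrix.mul_apply]
  rw [Finset.sum_eq_single i (fun l _ hl => by
    rcases lt_or_gt_of_ne hl with h | h
    · rw [hyl i l h, zero_mul]
    · simp only [U, Matrix.of_apply]
      rw [if_neg (ne_of_gt h), if_neg (asymm h), mul_zero]) (fun h => absurd (Finset.mem_univ i) h)]
  simp [U, hyd i]

lemma yU_upper {n : ℕ} (κ : Fin n → ℤ) (μ : Fin n → Fin n → ℤ) (y : Mn n)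
    (hyd : ∀ i, y i i = 1) (hyl : ∀ i j : Fin n, j < i → y i j = 0)
    {i j : Fin n} (hij : i < j) :
    (y * U n κ μ) i j = (2:ℝ) ^ (κ j) *
      ((μ i j : ℝ) + y i j + ∑ l ∈ Finset.Ioo i j, y i l * (μ l j : ℝ)) := by
  rw [Matrix.mul_apply]
  have hrestrict : ∑ l, y i l * U n κ μ l j = ∑ l ∈ Finset.Icc i j, y i l * U n κ μ l j := by
    refine (Finset.sum_subset (Finset.subset_univ _) ?_).symm
    intro l _ hl
    rw [Finset.mem_Icc, not_and_or] at hl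
    rcases hl with h | h
    · rw [hyl i l (not_le.mp h), zero_mul]
    · have hjl : j < l := not_le.mp h
      simp only [U, Matrix.of_apply]
      rw [if_neg (ne_of_gt hjl), if_neg (asymm hjl), mul_zero]
  rw [hrestrict, ← Finset.Ico_insert_right (le_of_lt hij), ← Finset.Ioo_insert_left hij,
    Finset.sum_insert (by
      rw [Finset.Ioo_insert_left hij]; exact Finset.right_notMem_Ico),
    Finset.sum_insert Finset.left_notMem_Ioo]
  have hujj : U n κ μ j j = (2:ℝ)^(κ j) := by simp [U]
  have huij : U n κ μ i j = (2:ℝ)^(κ j) * (μ i j : ℝ) := by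
    simp only [U, Matrix.of_apply]; rw [if_neg (ne_of_lt hij), if_pos hij]
  have hsum : ∑ l ∈ Finset.Ioo i j, y i l * U n κ μ l j
      = (2:ℝ)^(κ j) * ∑ l ∈ Finset.Ioo i j, y i l * (μ l j : ℝ) := by
    rw [Finset.mul_sum]
    refine Finset.sum_congr rfl (fun l hl => ?_)
    rw [Finset.mem_Ioo] at hl
    simp only [U, Matrix.of_apply]
    rw [if_neg (ne_of_lt hl.2), if_pos hl.2]
    ring
  rw [hujj, huij, hsum, hyd i]
  ring

lemma prod_zpow2 {ι : Type*} (s : Finset ι) (f : ι → ℤ) :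
    ∏ i ∈ s, (2:ℝ) ^ f i = 2 ^ (∑ i ∈ s, f i) := by
  induction s using Finset.cons_induction with
  | empty => simp
  | cons a s ha ih =>
    rw [Finset.prod_cons, Finset.sum_cons, ih, zpow_add₀ (by norm_num : (2:ℝ) ≠ 0)]


/-- The translates of the tile `F` by distinct elements of the discrete
set `P` are disjoint: `F·p ∩ F·q = ∅` for all `p ≠ q` in `P`, where
`F·p = {a * p : a ∈ F}`. -/
theorem stmt_11 (n : ℕ) (hn : 1 ≤ n) (p q : Mn n) (hp : p ∈ Pset n) (hq : q ∈ Pset n)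
    (hpq : p ≠ q) :
    ((· * p) '' Fset n) ∩ ((· * q) '' Fset n) = ∅ := by
  obtain ⟨m, rfl⟩ : ∃ m, n = m + 1 := ⟨n - 1, by omega⟩
  obtain ⟨lam, κ, μ, hκ0, hpe⟩ := hp
  obtain ⟨lam', κ', μ', hκ0', hqe⟩ := hq
  have hpu : p = (2:ℝ)^lam • U (m+1) κ μ := hpe
  have hqu : q = (2:ℝ)^lam' • U (m+1) κ' μ' := hqe
  rw [Set.eq_empty_iff_forall_notMem]
  rintro x ⟨⟨a, ha, rfl⟩, a', ha', hx⟩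
  obtain ⟨s, k, wd, y, hs, hk, hw, hwlast, hyd, hyl, hyu, rfl⟩ := ha
  obtain ⟨s', k', wd', y', hs', hk', hw', hwlast', hyd', hyl', hyu', rfl⟩ := ha'
  simp only [Nat.add_sub_cancel] at hw hwlast hw' hwlast'
  apply hpq
  have h2 : (0:ℝ) < 2 := by norm_num
  -- positivity of the diagonal data
  have hfprodpos : 0 < ∏ j ∈ Finset.filter (fun j : Fin (m+1) => (j:ℕ) < m) Finset.univ, wd j :=
    Finset.prod_pos (fun j hj => by linarith [(hw j (Finset.mem_filter.mp hj).2).1])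
  have hfprodpos' : 0 < ∏ j ∈ Finset.filter (fun j : Fin (m+1) => (j:ℕ) < m) Finset.univ, wd' j :=
    Finset.prod_pos (fun j hj => by linarith [(hw' j (Finset.mem_filter.mp hj).2).1])
  have hwpos : ∀ i : Fin (m+1), 0 < wd i := by
    intro i
    rcases lt_or_eq_of_le (Nat.lt_succ_iff.mp i.isLt) with h | h
    · linarith [(hw i h).1]
    · rw [hwlast i h]; exact inv_pos.2 hfprodpos
  have hwpos' : ∀ i : Fin (m+1), 0 < wd' i := by
    intro i
    rcases lt_or_eq_of_le (Nat.lt_succ_iff.mp i.isLt) with h | h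
    · linarith [(hw' i h).1]
    · rw [hwlast' i h]; exact inv_pos.2 hfprodpos'
  have hspos : (0:ℝ) < s := by linarith [hs.1]
  have hspos' : (0:ℝ) < s' := by linarith [hs'.1]
  set c := s * 2 ^ lam with hc
  set c' := s' * 2 ^ lam' with hc'
  have hcpos : 0 < c := mul_pos hspos (zpow_pos h2 _)
  have hcpos' : 0 < c' := mul_pos hspos' (zpow_pos h2 _)
  set T : Mn (m+1) := c • (Matrix.diagonal wd * (y * U (m+1) κ μ)) with hT
  set T' : Mn (m+1) := c' • (Matrix.diagonal wd' * (y' * U (m+1) κ' μ')) with hT'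
  have hybt : y.BlockTriangular id := fun i j hij => hyl i j hij
  have hybt' : y'.BlockTriangular id := fun i j hij => hyl' i j hij
  have hTbt : T.BlockTriangular id := by
    intro i j hij
    have h0 : (Matrix.diagonal wd * (y * U (m+1) κ μ)) i j = 0 :=
      ((Matrix.blockTriangular_diagonal wd).mul (hybt.mul (U_bt κ μ))) hij
    rw [hT, Matrix.smul_apply, h0, smul_zero]
  have hT'bt : T'.BlockTriangular id := by
    intro i j hij
    have h0 : (Matrix.diagonal wd' * (y' * U (m+1) κ' μ')) i j = 0 :=
      ((Matrix.blockTriangular_diagonal wd').mul (hybt'.mul (U_bt κ' μ'))) hij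
    rw [hT', Matrix.smul_apply, h0, smul_zero]
  have hTii : ∀ i, T i i = c * (wd i * 2 ^ κ i) := by
    intro i
    rw [hT, Matrix.smul_apply, Matrix.diagonal_mul, yU_diag κ μ y hyd hyl i, smul_eq_mul]
  have hT'ii : ∀ i, T' i i = c' * (wd' i * 2 ^ κ' i) := by
    intro i
    rw [hT', Matrix.smul_apply, Matrix.diagonal_mul, yU_diag κ' μ' y' hyd' hyl' i, smul_eq_mul]
  have hTd : ∀ i, 0 < T i i := fun i => by
    rw [hTii i]; exact mul_pos hcpos (mul_pos (hwpos i) (zpow_pos h2 _))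
  have hT'd : ∀ i, 0 < T' i i := fun i => by
    rw [hT'ii i]; exact mul_pos hcpos' (mul_pos (hwpos' i) (zpow_pos h2 _))
  have hkT : (s • (k * Matrix.diagonal wd * y)) * p = k * T := by
    rw [hpu, hT]
    simp only [Matrix.smul_mul, Matrix.mul_smul, smul_smul, Matrix.mul_assoc, hc]
    rw [mul_comm ((2:ℝ)^lam) s]
  have hkT' : (s' • (k' * Matrix.diagonal wd' * y')) * q = k' * T' := by
    rw [hqu, hT']
    simp only [Matrix.smul_mul, Matrix.mul_smul, smul_smul, Matrix.mul_assoc, hc']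
    rw [mul_comm ((2:ℝ)^lam') s']
  have hTT' : T = T' := by
    refine qr_unique k k' T T' hk hk' hTbt hT'bt hTd hT'd ?_
    rw [← hkT, ← hkT']
    exact hx.symm
  -- diagonal equalities
  have hdiageq : ∀ i, c * (wd i * 2 ^ κ i) = c' * (wd' i * 2 ^ κ' i) := by
    intro i; rw [← hTii i, ← hT'ii i, hTT']
  -- product of wd is 1
  have hnotf : Finset.filter (fun j : Fin (m+1) => ¬ ((j:ℕ) < m)) Finset.univ
      = {Fin.last m} := by
    ext j
    simp only [Finset.mem_filter, Finset.mem_univ, true_and, Finset.mem_singleton,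
      Fin.ext_iff, Fin.val_last]
    have := j.isLt
    omega
  have hprodwd : ∏ i, wd i = 1 := by
    have h1 := Finset.prod_filter_mul_prod_filter_not Finset.univ
      (fun j : Fin (m+1) => (j:ℕ) < m) wd
    rw [hnotf, Finset.prod_singleton, hwlast _ (Fin.val_last m),
      mul_inv_cancel₀ hfprodpos.ne'] at h1
    exact h1.symm
  have hprodwd' : ∏ i, wd' i = 1 := by
    have h1 := Finset.prod_filter_mul_prod_filter_not Finset.univ
      (fun j : Fin (m+1) => (j:ℕ) < m) wd'
    rw [hnotf, Finset.prod_singleton, hwlast' _ (Fin.val_last m),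
      mul_inv_cancel₀ hfprodpos'.ne'] at h1
    exact h1.symm
  -- c = c'
  have hceq : c = c' := by
    have hpp : ∏ i, (c * (wd i * 2 ^ κ i)) = ∏ i, (c' * (wd' i * 2 ^ κ' i)) :=
      Finset.prod_congr rfl (fun i _ => hdiageq i)
    have hL : ∏ i : Fin (m+1), (c * (wd i * 2 ^ κ i)) = c ^ (m+1) := by
      rw [Finset.prod_mul_distrib, Finset.prod_const, Finset.card_univ, Fintype.card_fin,
        Finset.prod_mul_distrib, hprodwd, prod_zpow2, hκ0, one_mul, zpow_zero, mul_one]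
    have hR : ∏ i : Fin (m+1), (c' * (wd' i * 2 ^ κ' i)) = c' ^ (m+1) := by
      rw [Finset.prod_mul_distrib, Finset.prod_const, Finset.card_univ, Fintype.card_fin,
        Finset.prod_mul_distrib, hprodwd', prod_zpow2, hκ0', one_mul, zpow_zero, mul_one]
    have hpow : c ^ (m+1) = c' ^ (m+1) := by rw [← hL, ← hR, hpp]
    rcases lt_trichotomy c c' with hlt | he | hgt
    · exact absurd hpow (ne_of_lt (pow_lt_pow_left₀ hlt hcpos.le (Nat.succ_ne_zero m)))
    · exact he
    · exact absurd hpow.symm (ne_of_lt (pow_lt_pow_left₀ hgt hcpos'.le (Nat.succ_ne_zero m)))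
  obtain ⟨hlameq, hseq⟩ := dyadic_unique hs hs' (by rw [← hc, ← hc']; exact hceq)
  -- wd and κ equalities
  have hwdeq : ∀ i, wd i * 2 ^ κ i = wd' i * 2 ^ κ' i := fun i =>
    mul_left_cancel₀ hcpos.ne' (by rw [hdiageq i, ← hceq])
  have hkw : ∀ i : Fin (m+1), (i:ℕ) < m → κ i = κ' i ∧ wd i = wd' i := fun i h =>
    dyadic_unique (hw i h) (hw' i h) (hwdeq i)
  have hκeq : ∀ i, κ i = κ' i := by
    have hsumf : ∑ i ∈ Finset.filter (fun j : Fin (m+1) => (j:ℕ) < m) Finset.univ, κ i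
        = ∑ i ∈ Finset.filter (fun j : Fin (m+1) => (j:ℕ) < m) Finset.univ, κ' i :=
      Finset.sum_congr rfl (fun i hi => (hkw i (Finset.mem_filter.mp hi).2).1)
    have h1 := Finset.sum_filter_add_sum_filter_not Finset.univ
      (fun j : Fin (m+1) => (j:ℕ) < m) κ
    have h2' := Finset.sum_filter_add_sum_filter_not Finset.univ
      (fun j : Fin (m+1) => (j:ℕ) < m) κ'
    rw [hnotf, Finset.sum_singleton, hκ0] at h1
    rw [hnotf, Finset.sum_singleton, hκ0'] at h2'
    have hlast : κ (Fin.last m) = κ' (Fin.last m) := by linarith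
    intro i
    rcases lt_or_eq_of_le (Nat.lt_succ_iff.mp i.isLt) with h | h
    · exact (hkw i h).1
    · have : i = Fin.last m := Fin.ext (by rw [Fin.val_last]; exact h)
      rw [this]; exact hlast
  -- upper entries
  have hTij : ∀ i j : Fin (m+1), i < j → T i j =
      c * (wd i * ((2:ℝ) ^ (κ j) *
        ((μ i j : ℝ) + y i j + ∑ l ∈ Finset.Ioo i j, y i l * (μ l j : ℝ)))) := by
    intro i j hij
    rw [hT, Matrix.smul_apply, Matrix.diagonal_mul, yU_upper κ μ y hyd hyl hij, smul_eq_mul]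
  have hT'ij : ∀ i j : Fin (m+1), i < j → T' i j =
      c' * (wd' i * ((2:ℝ) ^ (κ' j) *
        ((μ' i j : ℝ) + y' i j + ∑ l ∈ Finset.Ioo i j, y' i l * (μ' l j : ℝ)))) := by
    intro i j hij
    rw [hT', Matrix.smul_apply, Matrix.diagonal_mul, yU_upper κ' μ' y' hyd' hyl' hij, smul_eq_mul]
  have hAeq : ∀ i j : Fin (m+1), i < j →
      (μ i j : ℝ) + y i j + ∑ l ∈ Finset.Ioo i j, y i l * (μ l j : ℝ)
      = (μ' i j : ℝ) + y' i j + ∑ l ∈ Finset.Ioo i j, y' i l * (μ' l j : ℝ) := by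
    intro i j hij
    have him : (i:ℕ) < m := by
      have hj := j.isLt
      have : (i:ℕ) < (j:ℕ) := hij
      omega
    have e1 := hTij i j hij
    rw [hTT', hT'ij i j hij] at e1
    rw [← hceq, ← (hkw i him).2, ← hκeq j] at e1
    have e2 := mul_left_cancel₀ hcpos.ne' e1
    have e3 := mul_left_cancel₀ (hwpos i).ne' e2
    exact (mul_left_cancel₀ (zpow_pos h2 (κ j)).ne' e3).symm
  -- induction on the gap
  have key : ∀ N : ℕ, ∀ i j : Fin (m+1), i < j → (j:ℕ) - (i:ℕ) ≤ N →
      y i j = y' i j ∧ μ i j = μ' i j := by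
    intro N
    induction N with
    | zero =>
      intro i j hij hle
      have : (i:ℕ) < (j:ℕ) := hij
      omega
    | succ N ih =>
      intro i j hij hle
      have hijn : (i:ℕ) < (j:ℕ) := hij
      have hS : ∑ l ∈ Finset.Ioo i j, y i l * (μ l j : ℝ)
          = ∑ l ∈ Finset.Ioo i j, y' i l * (μ' l j : ℝ) := by
        refine Finset.sum_congr rfl (fun l hl => ?_)
        rw [Finset.mem_Ioo] at hl
        have hil : (i:ℕ) < (l:ℕ) := hl.1
        have hlj : (l:ℕ) < (j:ℕ) := hl.2
        rw [(ih i l hl.1 (by omega)).1, (ih l j hl.2 (by omega)).2]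
      have hA := hAeq i j hij
      rw [hS] at hA
      have hb := hyu i j hij
      have hb' := hyu' i j hij
      have hcast : ((μ' i j - μ i j : ℤ) : ℝ) = y i j - y' i j := by push_cast; linarith
      have hz : μ' i j - μ i j = 0 := by
        have habs : |((μ' i j - μ i j : ℤ) : ℝ)| < 1 := by
          rw [hcast, abs_lt]
          exact ⟨by linarith [hb.1, hb'.2], by linarith [hb.2, hb'.1]⟩
        have h1i : |μ' i j - μ i j| < 1 := by
          rw [← Int.cast_abs (R := ℝ)] at habs
          exact_mod_cast habs
        exact Int.abs_lt_one_iff.mp h1i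
      have hy0 : y i j - y' i j = 0 := by
        rw [← hcast, hz, Int.cast_zero]
      exact ⟨by linarith, by omega⟩
  -- conclude p = q
  rw [hpu, hqu, hlameq]
  congr 1
  ext i j
  simp only [U, Matrix.of_apply]
  rcases eq_or_ne i j with rfl | hij
  · rw [if_pos rfl, if_pos rfl, hκeq i]
  · rw [if_neg hij, if_neg hij]
    rcases lt_or_gt_of_ne hij with h | h
    · have hμ : μ i j = μ' i j := (key (m+1) i j h (by omega)).2
      rw [if_pos h, if_pos h, hκeq j, hμ]
    · rw [if_neg (asymm h), if_neg (asymm h)]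
end
end

section
/- With F and P the explicit tile and discrete set in GL_n(ℝ) defined below, the translates of F by P cover GL_n(ℝ): ⋃_{p∈P} F·p = GL_n(ℝ), where F·p = {ap : a ∈ F}. Equivalently, for every a ∈ GL_n(ℝ) there exist (unique) f ∈ F and p ∈ P with a = f·p. -/
noncomputable section

open Matrix InnerProductSpace in
private lemma repr_gramSchmidt_diag' {𝕜 E : Type*} [RCLike 𝕜] [NormedAddCommGroup E]
    [InnerProductSpace 𝕜 E] {ι : Type*} [LinearOrder ι] [LocallyFiniteOrderBot ι]
    [WellFoundedLT ι] (b : Module.Basis ι 𝕜 E) (i : ι) :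
    b.repr (gramSchmidt 𝕜 b i) i = 1 := by
  have h := gramSchmidt_def'' 𝕜 (b : ι → E) i
  have happ := congrArg (fun x => b.repr x i) h
  simp only [map_add, map_sum, _root_.map_smul, Finsupp.add_apply, Finsupp.coe_finset_sum,
    Finset.sum_apply, Finsupp.smul_apply, Module.Basis.repr_self, Finsupp.single_eq_same] at happ
  have hz : ∀ j ∈ Finset.Iio i, (inner 𝕜 (gramSchmidt 𝕜 (⇑b) j) (b i) /
      (‖gramSchmidt 𝕜 (⇑b) j‖ : 𝕜) ^ 2) • b.repr (gramSchmidt 𝕜 (⇑b) j) i = 0 := by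
    intro j hj
    have hji : j < i := Finset.mem_Iio.mp hj
    have hmem : gramSchmidt 𝕜 (⇑b) j ∈ Submodule.span 𝕜 (⇑b '' Set.Iic j) :=
      gramSchmidt_mem_span 𝕜 (⇑b) (le_refl j)
    have hsupp := b.repr_support_subset_of_mem_span (Set.Iic j) hmem
    have : b.repr (gramSchmidt 𝕜 (⇑b) j) i = 0 := by
      by_contra hne
      exact absurd (hsupp (Finsupp.mem_support_iff.mpr hne)) (not_le.mpr hji)
    rw [this, smul_zero]
  rw [Finset.sum_congr rfl hz, Finset.sum_const_zero, add_zero] at happ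
  exact happ.symm

open Matrix in
private lemma posDef_transpose_mul_self' {n : ℕ} (a : Mn n) (ha : a.det ≠ 0) :
    (aᵀ * a).PosDef := by
  rw [posDef_iff_dotProduct_mulVec]
  constructor
  · have := isHermitian_conjTranspose_mul_self a
    rwa [conjTranspose_eq_transpose_of_trivial] at this
  · intro x hx
    have hax : a *ᵥ x ≠ 0 := by
      intro h
      apply hx
      have hinj : Function.Injective a.mulVec :=
        mulVec_injective_iff_isUnit.mpr ((isUnit_iff_isUnit_det a).mpr (isUnit_iff_ne_zero.mpr ha))
      exact hinj (h.trans (a.mulVec_zero).symm)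
    have heq : star x ⬝ᵥ (aᵀ * a) *ᵥ x = (a *ᵥ x) ⬝ᵥ (a *ᵥ x) := by
      rw [star_trivial, ← mulVec_mulVec, dotProduct_mulVec, vecMul_transpose]
    rw [heq]
    refine lt_of_le_of_ne (Finset.sum_nonneg fun i _ => mul_self_nonneg _)
      (fun h => hax (dotProduct_self_eq_zero.mp h.symm))

open Matrix in
private lemma lowerInv_diag_one' {n : ℕ} [WellFoundedLT (Fin n)] {S : Mn n} (hS : S.PosDef)
    (i : Fin n) : LDL.lowerInv hS i i = 1 := by
  letI := (Sᵀ).toNormedAddCommGroup hS.transpose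
  letI := (Sᵀ).toInnerProductSpace hS.transpose.posSemidef
  have h := repr_gramSchmidt_diag' (Pi.basisFun ℝ (Fin n)) i
  rw [Pi.basisFun_repr] at h
  exact h

open Matrix in
private lemma conj_cancel' {n : ℕ} (L A S : Mn n) (hLA : L * A = 1) :
    L * (A * S * Aᵀ) * Lᵀ = S := by
  have h : L * (A * S * Aᵀ) * Lᵀ = (L * A) * S * (Aᵀ * Lᵀ) := by
    simp only [← Matrix.mul_assoc]
  rw [h, ← Matrix.transpose_mul, hLA, Matrix.transpose_one, Matrix.one_mul, Matrix.mul_one]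

open Matrix in
private lemma key_inv' {n : ℕ} (T a : Mn n) (hdet : IsUnit T.det) (hTT : Tᵀ * T = aᵀ * a) :
    (a * T⁻¹)ᵀ * (a * T⁻¹) = 1 := by
  rw [Matrix.transpose_mul, Matrix.transpose_nonsing_inv]
  rw [Matrix.mul_assoc (Tᵀ)⁻¹ aᵀ (a * T⁻¹), ← Matrix.mul_assoc aᵀ a T⁻¹, ← hTT]
  rw [Matrix.mul_assoc Tᵀ T T⁻¹, Matrix.mul_nonsing_inv T hdet, Matrix.mul_one]
  exact Matrix.nonsing_inv_mul Tᵀ (by rwa [Matrix.det_transpose])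

open Matrix in
private lemma qr_decomp' {n : ℕ} (a : Mn n) (ha : a.det ≠ 0) :
    ∃ (k : Mn n) (d : Fin n → ℝ) (Y : Mn n),
      kᵀ * k = 1 ∧ (∀ i, 0 < d i) ∧ (∀ i, Y i i = 1) ∧
      (∀ i j : Fin n, j < i → Y i j = 0) ∧ a = k * Matrix.diagonal d * Y := by
  haveI : WellFoundedLT (Fin n) := inferInstance
  have hS : (aᵀ * a).PosDef := posDef_transpose_mul_self' a ha
  set A := LDL.lowerInv hS with hAdef
  have hA_tri : ∀ i j : Fin n, i < j → A i j = 0 :=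
    fun i j h => LDL.lowerInv_triangular hS h
  have hA_diag : ∀ i, A i i = 1 := lowerInv_diag_one' hS
  have hA_bt : A.BlockTriangular (OrderDual.toDual : Fin n → (Fin n)ᵒᵈ) :=
    fun i j h => hA_tri i j h
  have hA_det : A.det = 1 := by
    rw [Matrix.det_of_lowerTriangular A hA_bt]
    exact Finset.prod_eq_one fun i _ => hA_diag i
  have hA_unit : IsUnit A.det := by rw [hA_det]; exact isUnit_one
  set L := A⁻¹ with hLdef
  have hLA : L * A = 1 := Matrix.nonsing_inv_mul A hA_unit
  have hAL : A * L = 1 := Matrix.mul_nonsing_inv A hA_unit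
  haveI : Invertible A := A.invertibleOfIsUnitDet hA_unit
  have hL_bt : L.BlockTriangular (OrderDual.toDual : Fin n → (Fin n)ᵒᵈ) :=
    Matrix.blockTriangular_inv_of_blockTriangular hA_bt
  have hL_lower : ∀ i j : Fin n, i < j → L i j = 0 := fun i j h => hL_bt h
  have hL_diag : ∀ i, L i i = 1 := by
    intro i
    have h1 : (A * L) i i = 1 := by rw [hAL]; simp
    rw [Matrix.mul_apply] at h1
    rw [Finset.sum_eq_single i (fun k _ hk => by
      rcases lt_or_gt_of_ne hk with h | h
      · rw [hL_lower k i h, mul_zero]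
      · rw [hA_tri i k h, zero_mul]) (by simp)] at h1
    rw [hA_diag] at h1
    simpa using h1
  have hDconv : Matrix.diagonal (LDL.diagEntries hS) = A * (aᵀ * a) * Aᵀ := by
    have h := LDL.diag_eq_lowerInv_conj hS
    rw [conjTranspose_eq_transpose_of_trivial] at h
    rw [LDL.diag] at h
    convert h using 2
  have hd_pos : ∀ i, 0 < LDL.diagEntries hS i := by
    intro i
    have hx : A i ≠ 0 := by
      intro h
      have := congrFun h i
      rw [hA_diag] at this
      simp at this
    have h2 : Matrix.diagonal (LDL.diagEntries hS) i i = A i ⬝ᵥ (aᵀ * a) *ᵥ A i := by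
      rw [hDconv, Matrix.mul_mul_apply, Matrix.transpose_transpose]
    rw [Matrix.diagonal_apply_eq] at h2
    have h4 := hS.dotProduct_mulVec_pos hx
    rw [star_trivial] at h4
    rw [h2]
    exact h4
  have hLDL : L * Matrix.diagonal (LDL.diagEntries hS) * Lᵀ = aᵀ * a := by
    rw [hDconv]
    exact conj_cancel' L A (aᵀ * a) hLA
  set d : Fin n → ℝ := fun i => Real.sqrt (LDL.diagEntries hS i) with hddef
  have hd : ∀ i, 0 < d i := fun i => Real.sqrt_pos.mpr (hd_pos i)
  have hdd : Matrix.diagonal (fun i => d i * d i) = Matrix.diagonal (LDL.diagEntries hS) := by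
    have : (fun i => d i * d i) = LDL.diagEntries hS :=
      funext fun i => Real.mul_self_sqrt (hd_pos i).le
    rw [this]
  have hT_entry : ∀ i j, (Matrix.diagonal d * Lᵀ) i j = d i * L j i := by
    intro i j; rw [Matrix.diagonal_mul]; rfl
  have hT_ut : ∀ i j : Fin n, j < i → (Matrix.diagonal d * Lᵀ) i j = 0 := by
    intro i j h; rw [hT_entry, hL_lower j i h, mul_zero]
  have hT_diag : ∀ i, (Matrix.diagonal d * Lᵀ) i i = d i := by
    intro i; rw [hT_entry, hL_diag, mul_one]
  have hdetT : (Matrix.diagonal d * Lᵀ).det = ∏ i, d i := by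
    rw [Matrix.det_of_upperTriangular (fun i j h => hT_ut i j h)]
    exact Finset.prod_congr rfl fun i _ => hT_diag i
  have hdetT_ne : IsUnit (Matrix.diagonal d * Lᵀ).det := by
    rw [hdetT]
    exact isUnit_iff_ne_zero.mpr (ne_of_gt (Finset.prod_pos fun i _ => hd i))
  have hTT : (Matrix.diagonal d * Lᵀ)ᵀ * (Matrix.diagonal d * Lᵀ) = aᵀ * a := by
    rw [Matrix.transpose_mul, Matrix.transpose_transpose, Matrix.diagonal_transpose]
    calc L * Matrix.diagonal d * (Matrix.diagonal d * Lᵀ)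
        = L * (Matrix.diagonal d * Matrix.diagonal d) * Lᵀ := by
          simp only [← Matrix.mul_assoc]
      _ = aᵀ * a := by
          rw [Matrix.diagonal_mul_diagonal, hdd, hLDL]
  set T : Mn n := Matrix.diagonal d * Lᵀ with hTdef
  refine ⟨a * T⁻¹, d, Matrix.diagonal (fun i => (d i)⁻¹) * T,
    key_inv' T a hdetT_ne hTT, hd, ?_, ?_, ?_⟩
  · intro i
    have h : (Matrix.diagonal (fun i => (d i)⁻¹) * T) i i = (d i)⁻¹ * T i i := by
      rw [Matrix.diagonal_mul]
    rw [h, hT_diag]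
    exact inv_mul_cancel₀ (hd i).ne'
  · intro i j h
    have h' : (Matrix.diagonal (fun i => (d i)⁻¹) * T) i j = (d i)⁻¹ * T i j := by
      rw [Matrix.diagonal_mul]
    rw [h', hT_ut i j h, mul_zero]
  · have hDY : Matrix.diagonal d * (Matrix.diagonal (fun i => (d i)⁻¹) * T) = T := by
      rw [← Matrix.mul_assoc, Matrix.diagonal_mul_diagonal]
      have h : (fun i => d i * (d i)⁻¹) = fun _ => (1:ℝ) := by
        funext i; exact mul_inv_cancel₀ (hd i).ne'
      rw [h, Matrix.diagonal_one, Matrix.one_mul]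
    rw [Matrix.mul_assoc, Matrix.mul_assoc, hDY,
      Matrix.nonsing_inv_mul T hdetT_ne, Matrix.mul_one]

noncomputable def triC {n : ℕ} (z : Mn n) (i j : Fin n) : ℝ :=
  z i j - ∑ l ∈ (Finset.Ioo i j).attach,
    Int.fract (triC z i l.1) * (⌊triC z l.1 j⌋ : ℝ)
termination_by (j : ℕ) - (i : ℕ)
decreasing_by
  · have h := Finset.mem_Ioo.mp l.2
    have h1 : (i:ℕ) < l.1 := h.1
    have h2 : (l.1:ℕ) < j := h.2
    omega
  · have h := Finset.mem_Ioo.mp l.2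
    have h1 : (i:ℕ) < l.1 := h.1
    have h2 : (l.1:ℕ) < j := h.2
    omega

noncomputable def triY {n : ℕ} (z : Mn n) : Mn n :=
  Matrix.of fun i j => if i = j then 1 else if i < j then Int.fract (triC z i j) else 0

noncomputable def triN {n : ℕ} (z : Mn n) : Mn n :=
  Matrix.of fun i j => if i = j then 1 else if i < j then (⌊triC z i j⌋ : ℝ) else 0

private theorem triC_eq {n : ℕ} (z : Mn n) (i j : Fin n) :
    triC z i j = z i j - ∑ l ∈ Finset.Ioo i j, Int.fract (triC z i l) * (⌊triC z l j⌋ : ℝ) := by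
  rw [triC]
  congr 1
  rw [← Finset.sum_attach (Finset.Ioo i j) (fun l => Int.fract (triC z i l) * (⌊triC z l j⌋ : ℝ))]

private theorem tri_mul {n : ℕ} (z : Mn n) (hd : ∀ i, z i i = 1)
    (hl : ∀ i j : Fin n, j < i → z i j = 0) :
    triY z * triN z = z := by
  ext i j
  rcases lt_trichotomy i j with hij | rfl | hij
  · have hIcc : Finset.Icc i j = insert i (insert j (Finset.Ioo i j)) := by
      ext l
      simp only [Finset.mem_Icc, Finset.mem_insert, Finset.mem_Ioo]
      constructor
      · rintro ⟨h1, h2⟩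
        rcases eq_or_lt_of_le h1 with rfl | h1'
        · exact Or.inl rfl
        rcases eq_or_lt_of_le h2 with rfl | h2'
        · exact Or.inr (Or.inl rfl)
        exact Or.inr (Or.inr ⟨h1', h2'⟩)
      · rintro (rfl | rfl | ⟨h1, h2⟩)
        · exact ⟨le_refl _, le_of_lt hij⟩
        · exact ⟨le_of_lt hij, le_refl _⟩
        · exact ⟨le_of_lt h1, le_of_lt h2⟩
    have hsub : ∀ l, l ∉ Finset.Icc i j → triY z i l * triN z l j = 0 := by
      intro l hl'
      simp only [Finset.mem_Icc, not_and_or, not_le] at hl'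
      rcases hl' with h | h
      · have h1 : ¬ (i = l) := fun e => absurd e.le (not_le.mpr h)
        have h2 : ¬ (i < l) := not_lt.mpr h.le
        simp [triY, h1, h2]
      · have h1 : ¬ (l = j) := fun e => absurd e.le (not_le.mpr h)
        have h2 : ¬ (l < j) := not_lt.mpr h.le
        simp [triN, h1, h2]
    have hmm : (triY z * triN z) i j = ∑ l ∈ Finset.Icc i j, triY z i l * triN z l j := by
      rw [Matrix.mul_apply]
      exact (Finset.sum_subset (Finset.subset_univ _) (fun l _ hl' => hsub l hl')).symm
    rw [hmm, hIcc]
    have hi_not : i ∉ insert j (Finset.Ioo i j) := by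
      simp only [Finset.mem_insert, Finset.mem_Ioo]
      push_neg
      exact ⟨Fin.ne_of_lt hij, fun h => absurd h (lt_irrefl i)⟩
    have hj_not : j ∉ Finset.Ioo i j := by simp
    rw [Finset.sum_insert hi_not, Finset.sum_insert hj_not]
    have e1 : triY z i i = 1 := by simp [triY]
    have e2 : triN z i j = (⌊triC z i j⌋ : ℝ) := by simp [triN, Fin.ne_of_lt hij, hij]
    have e3 : triY z i j = Int.fract (triC z i j) := by simp [triY, Fin.ne_of_lt hij, hij]
    have e4 : triN z j j = 1 := by simp [triN]
    have e5 : ∀ l ∈ Finset.Ioo i j, triY z i l * triN z l j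
        = Int.fract (triC z i l) * (⌊triC z l j⌋ : ℝ) := by
      intro l hl'
      have h := Finset.mem_Ioo.mp hl'
      simp [triY, triN, Fin.ne_of_lt h.1, Fin.ne_of_lt h.2, h.1, h.2]
    rw [Finset.sum_congr rfl e5, e1, e2, e3, e4, one_mul, mul_one]
    have hce := triC_eq z i j
    have hfl := Int.fract_add_floor (triC z i j)
    linarith [hce]
  · have hterm : ∀ l : Fin n, triY z i l * triN z l i = if l = i then 1 else 0 := by
      intro l
      rcases lt_trichotomy l i with h | rfl | h
      · have h0 : triY z i l = 0 := by simp [triY, h.ne', not_lt.mpr h.le]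
        simp [h0, h.ne]
      · simp [triY, triN]
      · have h0 : triN z l i = 0 := by simp [triN, h.ne', not_lt.mpr h.le]
        simp [h0, h.ne']
    rw [Matrix.mul_apply, Finset.sum_congr rfl (fun l _ => hterm l), Finset.sum_ite_eq', hd]
    simp
  · rw [Matrix.mul_apply, hl i j hij]
    apply Finset.sum_eq_zero
    intro l _
    rcases lt_or_ge l i with h | h
    · have h0 : triY z i l = 0 := by simp [triY, h.ne', not_lt.mpr h.le]
      rw [h0, zero_mul]
    · have h0 : triN z l j = 0 := by
        have hjl : j < l := lt_of_lt_of_le hij h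
        simp [triN, hjl.ne', not_lt.mpr hjl.le]
      rw [h0, mul_zero]

private lemma prod_two_zpow {ι : Type*} (s : Finset ι) (κ : ι → ℤ) :
    ∏ i ∈ s, (2:ℝ) ^ (κ i) = 2 ^ (∑ i ∈ s, κ i) := by
  induction s using Finset.cons_induction with
  | empty => simp
  | cons a s ha ih =>
      rw [Finset.prod_cons, Finset.sum_cons, zpow_add₀ (by norm_num : (2:ℝ) ≠ 0), ih]

private lemma two_zpow_div_mem (x : ℝ) (hx : 0 < x) :
    x / 2 ^ (⌊Real.logb 2 x⌋) ∈ Set.Ico (1 : ℝ) 2 := by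
  constructor
  · rw [le_div_iff₀ (by positivity), one_mul]
    rw [← Real.rpow_intCast]
    calc (2:ℝ) ^ (⌊Real.logb 2 x⌋ : ℝ) ≤ 2 ^ Real.logb 2 x :=
          Real.rpow_le_rpow_of_exponent_le one_le_two (Int.floor_le _)
      _ = x := Real.rpow_logb (by norm_num) (by norm_num) hx
  · rw [div_lt_iff₀ (by positivity)]
    calc x = 2 ^ Real.logb 2 x := (Real.rpow_logb (by norm_num) (by norm_num) hx).symm
      _ < 2 ^ ((⌊Real.logb 2 x⌋ : ℝ) + 1) := by
          apply Real.rpow_lt_rpow_of_exponent_lt one_lt_two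
          exact Int.lt_floor_add_one _
      _ = 2 * 2 ^ ((⌊Real.logb 2 x⌋ : ℝ)) := by
          rw [Real.rpow_add (by norm_num), Real.rpow_one]; ring
      _ = 2 * 2 ^ ⌊Real.logb 2 x⌋ := by rw [← Real.rpow_intCast]

open Matrix
/-- The translates of the tile `F` by the discrete set `P` cover
`GL_n(ℝ)`: `⋃_{p ∈ P} F·p = GL_n(ℝ)`, where `F·p = {a * p : a ∈ F}`; equivalently,
every invertible matrix `a` can be written as `a = f * p` with `f ∈ F`, `p ∈ P`. -/
theorem stmt_12 (n : ℕ) (hn : 1 ≤ n) :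
    (⋃ p ∈ Pset n, (· * p) '' Fset n) = {a : Mn n | a.det ≠ 0} := by
  ext a
  simp only [Set.mem_iUnion, Set.mem_image, Set.mem_setOf_eq]
  constructor
  · rintro ⟨p, hp, f, hf, rfl⟩
    obtain ⟨lam, κ, μ, hκ, rfl⟩ := hp
    obtain ⟨s, k, wd, y, hs, hk, hwd1, hwd2, hy1, hy0, hyI, rfl⟩ := hf
    rw [Matrix.det_mul]
    have hs_pos : (0:ℝ) < s := lt_of_lt_of_le one_pos hs.1
    apply mul_ne_zero
    · rw [Matrix.det_smul]
      apply mul_ne_zero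
      · exact pow_ne_zero _ hs_pos.ne'
      rw [Matrix.det_mul, Matrix.det_mul]
      have hdk : k.det ≠ 0 := by
        intro h
        have h1 : (kᵀ * k).det = 1 := by rw [hk, Matrix.det_one]
        rw [Matrix.det_mul, Matrix.det_transpose, h] at h1
        norm_num at h1
      have hdy : y.det = 1 := by
        rw [Matrix.det_of_upperTriangular (fun i j (hij : j < i) => hy0 i j hij)]
        exact Finset.prod_eq_one fun i _ => hy1 i
      have hwd_pos : ∀ i, 0 < wd i := by
        intro i
        by_cases hc : (i:ℕ) < n - 1
        · linarith [(hwd1 i hc).1]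
        · have hieq : (i:ℕ) = n - 1 := by have := i.isLt; omega
          rw [hwd2 i hieq]
          apply inv_pos.mpr
          apply Finset.prod_pos
          intro j hj
          linarith [(hwd1 j (Finset.mem_filter.mp hj).2).1]
      rw [Matrix.det_diagonal, hdy, mul_one]
      exact mul_ne_zero hdk (ne_of_gt (Finset.prod_pos fun i _ => hwd_pos i))
    · rw [Matrix.det_smul]
      apply mul_ne_zero
      · exact pow_ne_zero _ (zpow_ne_zero _ (by norm_num))
      have hut : Matrix.BlockTriangular (Matrix.of (fun i j : Fin n =>
          if i = j then (2 : ℝ) ^ (κ i)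
          else if i < j then (2 : ℝ) ^ (κ j) * (μ i j : ℝ)
          else 0)) id := by
        intro i j hij
        have hji : j < i := hij
        have h1 : ¬ (i = j) := fun e => absurd (e ▸ hji) (lt_irrefl _)
        have h2 : ¬ (i < j) := not_lt.mpr hji.le
        simp [h1, h2]
      rw [Matrix.det_of_upperTriangular hut]
      have hdiagu : ∀ i : Fin n, (Matrix.of (fun i j : Fin n =>
          if i = j then (2 : ℝ) ^ (κ i)
          else if i < j then (2 : ℝ) ^ (κ j) * (μ i j : ℝ)
          else 0)) i i = (2:ℝ) ^ (κ i) := by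
        intro i; simp
      rw [Finset.prod_congr rfl (fun i _ => hdiagu i), prod_two_zpow, hκ]
      norm_num
  · intro ha
    obtain ⟨k, d, Y, hk, hd, hY1, hY0, haeq⟩ := qr_decomp' a ha
    have hprod_pos : 0 < ∏ i, d i := Finset.prod_pos fun i _ => hd i
    set G : ℝ := (∏ i, d i) ^ ((n:ℝ)⁻¹) with hGdef
    have hG : 0 < G := Real.rpow_pos_of_pos hprod_pos _
    have hGn : G ^ n = ∏ i, d i := Real.rpow_inv_natCast_pow hprod_pos.le (by omega)
    set lam : ℤ := ⌊Real.logb 2 G⌋ with hlamdef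
    set s : ℝ := G / 2 ^ lam with hsdef
    have hs : s ∈ Set.Ico (1:ℝ) 2 := two_zpow_div_mem G hG
    have hslam : s * 2 ^ lam = G := div_mul_cancel₀ G (zpow_ne_zero lam two_ne_zero)
    set r : Fin n → ℝ := fun i => d i / G with hrdef
    have hr_pos : ∀ i, 0 < r i := fun i => div_pos (hd i) hG
    have hprod_r : ∏ i, r i = 1 := by
      rw [hrdef, Finset.prod_div_distrib, Finset.prod_const, Finset.card_univ,
        Fintype.card_fin, ← hGn, div_self (pow_ne_zero _ hG.ne')]
    set Sfin : Finset (Fin n) :=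
      Finset.filter (fun j : Fin n => (j:ℕ) < n - 1) Finset.univ with hSdef
    set κ : Fin n → ℤ := fun i =>
      if (i:ℕ) < n - 1 then ⌊Real.logb 2 (r i)⌋
      else -(∑ j ∈ Sfin, ⌊Real.logb 2 (r j)⌋) with hκdef
    have hlast_mem : n - 1 < n := by omega
    have hcompl : Finset.filter (fun j : Fin n => ¬ ((j:ℕ) < n - 1)) Finset.univ
        = {(⟨n-1, hlast_mem⟩ : Fin n)} := by
      ext j
      simp only [Finset.mem_filter, Finset.mem_univ, true_and, Finset.mem_singleton, not_lt]
      constructor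
      · intro h
        have hjlt := j.isLt
        have hv : (j:ℕ) = n - 1 := by omega
        exact Fin.ext hv
      · rintro rfl
        exact le_refl _
    have hκSfin : ∀ i ∈ Sfin, κ i = ⌊Real.logb 2 (r i)⌋ := by
      intro i hi
      rw [hκdef]
      simp only
      rw [if_pos (Finset.mem_filter.mp hi).2]
    have hκsum : ∑ i, κ i = 0 := by
      have hsplit := Finset.sum_filter_add_sum_filter_not Finset.univ
        (fun j : Fin n => (j:ℕ) < n - 1) κ
      rw [hcompl, Finset.sum_singleton] at hsplit
      have h2 : κ (⟨n-1, hlast_mem⟩ : Fin n) = -(∑ j ∈ Sfin, ⌊Real.logb 2 (r j)⌋) := by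
        rw [hκdef]
        simp only
        rw [if_neg (by simp)]
      have h1 : ∑ i ∈ Finset.filter (fun j : Fin n => (j:ℕ) < n - 1) Finset.univ, κ i
          = ∑ j ∈ Sfin, ⌊Real.logb 2 (r j)⌋ :=
        Finset.sum_congr rfl (fun i hi => hκSfin i hi)
      rw [h1, h2, add_neg_cancel] at hsplit
      exact hsplit.symm
    set wd : Fin n → ℝ := fun i => r i / 2 ^ (κ i) with hwddef
    have hwd_eq : ∀ i, wd i * 2 ^ (κ i) = r i :=
      fun i => div_mul_cancel₀ _ (zpow_ne_zero _ two_ne_zero)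
    have hwd_Ico : ∀ i : Fin n, (i:ℕ) < n - 1 → wd i ∈ Set.Ico (1:ℝ) 2 := by
      intro i hi
      have hκi : κ i = ⌊Real.logb 2 (r i)⌋ := by rw [hκdef]; simp only; rw [if_pos hi]
      have := two_zpow_div_mem (r i) (hr_pos i)
      rw [hwddef]
      simp only
      rw [hκi]
      exact this
    have hprod_wd : ∏ i, wd i = 1 := by
      rw [hwddef]
      simp only
      rw [Finset.prod_div_distrib, hprod_r, prod_two_zpow, hκsum]
      norm_num
    have hwd_last : ∀ i : Fin n, (i:ℕ) = n - 1 → wd i = (∏ j ∈ Sfin, wd j)⁻¹ := by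
      intro i hi
      have hieq : i = (⟨n-1, hlast_mem⟩ : Fin n) := Fin.ext hi
      have hsplit := Finset.prod_filter_mul_prod_filter_not Finset.univ
        (fun j : Fin n => (j:ℕ) < n - 1) wd
      rw [hcompl, Finset.prod_singleton, hprod_wd] at hsplit
      rw [hieq]
      exact eq_inv_of_mul_eq_one_right hsplit
    set z : Mn n := Matrix.of (fun i j : Fin n => (2:ℝ) ^ (κ i - κ j) * Y i j) with hzdef
    have hz1 : ∀ i, z i i = 1 := by
      intro i
      rw [hzdef]
      simp [hY1 i]
    have hz0 : ∀ i j : Fin n, j < i → z i j = 0 := by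
      intro i j h
      rw [hzdef]
      simp [hY0 i j h]
    have hyN : triY z * triN z = z := tri_mul z hz1 hz0
    set μ : Fin n → Fin n → ℤ := fun i j => ⌊triC z i j⌋ with hμdef
    set u : Mn n := Matrix.of (fun i j : Fin n =>
      if i = j then (2 : ℝ) ^ (κ i)
      else if i < j then (2 : ℝ) ^ (κ j) * (μ i j : ℝ)
      else 0) with hudef
    have hu : u = triN z * Matrix.diagonal (fun i => (2:ℝ) ^ (κ i)) := by
      rw [hudef]
      ext i j
      rw [Matrix.mul_diagonal]
      rcases lt_trichotomy i j with h | rfl | h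
      · simp [triN, h.ne, h, hμdef, mul_comm]
      · simp [triN]
      · simp [triN, h.ne', not_lt.mpr h.le]
    refine ⟨(2:ℝ) ^ lam • u, ⟨lam, κ, μ, hκsum, rfl⟩,
      s • (k * Matrix.diagonal wd * triY z),
      ⟨s, k, wd, triY z, hs, hk, hwd_Ico, hwd_last, ?_, ?_, ?_, rfl⟩, ?_⟩
    · intro i; simp [triY]
    · intro i j h; simp [triY, h.ne', not_lt.mpr h.le]
    · intro i j h
      have : triY z i j = Int.fract (triC z i j) := by simp [triY, h.ne, h]
      rw [this]
      exact ⟨Int.fract_nonneg _, Int.fract_lt_one _⟩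
    · rw [smul_mul_assoc, mul_smul_comm, smul_smul, hu]
      have hassoc : k * Matrix.diagonal wd * triY z *
            (triN z * Matrix.diagonal fun i => (2:ℝ) ^ κ i)
          = k * (Matrix.diagonal wd * (triY z * triN z) *
            Matrix.diagonal fun i => (2:ℝ) ^ κ i) := by
        simp only [← Matrix.mul_assoc]
      rw [hassoc, hyN]
      have hmid : Matrix.diagonal wd * z * (Matrix.diagonal fun i => (2:ℝ) ^ κ i)
          = Matrix.diagonal (fun i => wd i * 2 ^ (κ i)) * Y := by
        ext i j
        rw [Matrix.mul_diagonal, Matrix.diagonal_mul, Matrix.diagonal_mul]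
        have h2 : ((2:ℝ) ^ (κ j)) ≠ 0 := zpow_ne_zero _ two_ne_zero
        rw [hzdef]
        show wd i * ((2:ℝ) ^ (κ i - κ j) * Y i j) * (2:ℝ) ^ (κ j)
            = wd i * (2:ℝ) ^ (κ i) * Y i j
        rw [zpow_sub₀ (two_ne_zero)]
        field_simp
      rw [hmid]
      have hwr : (fun i => wd i * (2:ℝ) ^ (κ i)) = r := funext hwd_eq
      rw [hwr]
      have hdr : (s * 2 ^ lam) • r = d := by
        funext i
        rw [hslam]
        simp only [Pi.smul_apply, smul_eq_mul, hrdef]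
        rw [mul_div_cancel₀ _ hG.ne']
      rw [← mul_smul_comm, ← smul_mul_assoc, ← Matrix.diagonal_smul, hdr, haeq, Matrix.mul_assoc]
end
end
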